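/- The pair (a,b) = (−1,1) satisfies the five equations (E1)–(E5), and the determinant of the 4×4 matrix [[2,−1,1,−1],[−1,2,−1,1],[1,−1,2,−1],[−1,1,−1,2]] is nonzero (it equals 5). (Hence (−1,1) is a point of F₂(T₄,₅) that violates the rectangle relation, i.e. a ghost character of the (4,5)-torus knot.) -/

import Mathlib

/-- The five defining equations (E1)–(E5) of the fundamental algebraic set
`F₂(T₄,₅)` in the coordinates `(a, b) = (x₁₂, x₁₃)`. -/
def F2Eqns (a b : ℂ) : Prop :=
  a ^ 5 - 4 * a ^ 3 * b + 3 * a ^ 3 + 3 * a * b ^ 2 - 2 * a * b - 3 * a = 2 ∧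
  a ^ 6 - 4 * a ^ 4 * b + 2 * a ^ 4 + 3 * a ^ 2 * b ^ 2 + a ^ 2 * b - 5 * a ^ 2
    - b ^ 2 + 2 = a ∧
  a ^ 4 * b - a ^ 4 - 3 * a ^ 2 * b ^ 2 + 4 * a ^ 2 * b + b ^ 3 - 3 * b = a ∧
  a ^ 5 * b - a ^ 5 - 4 * a ^ 3 * b ^ 2 + 6 * a ^ 3 * b + 3 * a * b ^ 3 - a ^ 3
    - 3 * a * b ^ 2 - 5 * a * b + 3 * a = b ∧
  a ^ 5 - 3 * a ^ 3 * b + a ^ 3 + a * b ^ 2 + 2 * a * b - 3 * a = b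

/-- `(−1, 1)` satisfies (E1)–(E5), yet the rectangle-relation matrix evaluated at
`(x₁₂,x₁₃,x₁₄,x₂₃,x₂₄,x₃₄) = (−1,1,−1,−1,1,−1)` has nonzero determinant (namely `5`);
hence `(−1,1)` is a ghost character of the `(4,5)`-torus knot. -/
theorem stmt2 :
    F2Eqns (-1) 1 ∧
    Matrix.det !![(2 : ℂ), -1, 1, -1; -1, 2, -1, 1; 1, -1, 2, -1; -1, 1, -1, 2] = 5 ∧
    Matrix.det !![(2 : ℂ), -1, 1, -1; -1, 2, -1, 1; 1, -1, 2, -1; -1, 1, -1, 2] ≠ 0 := by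
  have hdet : Matrix.det !![(2 : ℂ), -1, 1, -1; -1, 2, -1, 1; 1, -1, 2, -1; -1, 1, -1, 2] = 5 := by
    simp [Matrix.det_succ_row_zero, Fin.sum_univ_succ, Fin.succAbove, Fin.ext_iff, Fin.castSucc, Fin.castAdd, Fin.castLE, Matrix.det_fin_one]
    ring
  refine ⟨⟨by ring, by ring, by ring, by ring, by ring⟩, hdet, by rw [hdet]; norm_num⟩
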